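/- arXiv:2411.17308 — 3 statements merged into one kernel-verified Lean document; each statement's English description precedes it below -/
import Mathlib

section
/- If D is a special PID (a PID with SL_2(D) = E_2(D)), then any localization S⁻¹D of D at a multiplicative subset S (with 0 ∉ S) is also a special PID. -/
/-- The elementary subgroup `E_n(R)` of `SL_n(R)`: the subgroup generated by the elementary
transvections `1 + t • e_{ij}`, `i ≠ j`. -/
def ElementarySubgroup (n : ℕ) (R : Type) [CommRing R] :
    Subgroup (Matrix.SpecialLinearGroup (Fin n) R) :=
  Subgroup.closure {M : Matrix.SpecialLinearGroup (Fin n) R |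
    ∃ (i j : Fin n) (t : R), i ≠ j ∧ (M : Matrix (Fin n) (Fin n) R) = Matrix.transvection i j t}

/-- `SL_n(R) = E_n(R)`. -/
def IsElementaryGenerated (n : ℕ) (R : Type) [CommRing R] : Prop :=
  ElementarySubgroup n R = ⊤

/-- A special PID: a principal ideal domain `D` with `SL_2(D) = E_2(D)`. -/
def IsSpecialPID (D : Type) [CommRing D] : Prop :=
  IsDomain D ∧ IsPrincipalIdealRing D ∧ IsElementaryGenerated 2 D

section Helpers
variable {R : Type} [CommRing R]

/-- The elementary matrix `e_{12}(t)` as an element of `SL₂`. -/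
def E12 (t : R) : Matrix.SpecialLinearGroup (Fin 2) R :=
  ⟨Matrix.transvection 0 1 t, Matrix.det_transvection_of_ne 0 1 (by decide) t⟩

/-- The elementary matrix `e_{21}(t)` as an element of `SL₂`. -/
def E21 (t : R) : Matrix.SpecialLinearGroup (Fin 2) R :=
  ⟨Matrix.transvection 1 0 t, Matrix.det_transvection_of_ne 1 0 (by decide) t⟩

lemma E12_mem (t : R) : E12 t ∈ ElementarySubgroup 2 R :=
  Subgroup.subset_closure ⟨0, 1, t, by decide, rfl⟩

lemma E21_mem (t : R) : E21 t ∈ ElementarySubgroup 2 R :=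
  Subgroup.subset_closure ⟨1, 0, t, by decide, rfl⟩

lemma coe_E12 (t : R) : ((E12 t : Matrix.SpecialLinearGroup (Fin 2) R) : Matrix (Fin 2) (Fin 2) R)
    = !![1, t; 0, 1] := by
  show Matrix.transvection 0 1 t = _
  ext i j
  fin_cases i <;> fin_cases j <;>
    simp [Matrix.transvection, Matrix.one_apply, Matrix.single]

lemma coe_E21 (t : R) : ((E21 t : Matrix.SpecialLinearGroup (Fin 2) R) : Matrix (Fin 2) (Fin 2) R)
    = !![1, 0; t, 1] := by
  show Matrix.transvection 1 0 t = _
  ext i j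
  fin_cases i <;> fin_cases j <;>
    simp [Matrix.transvection, Matrix.one_apply, Matrix.single]

/-- An upper triangular element of `SL₂` lies in the elementary subgroup. -/
lemma upper_tri_mem (M : Matrix.SpecialLinearGroup (Fin 2) R)
    (h : (M : Matrix (Fin 2) (Fin 2) R) 1 0 = 0) : M ∈ ElementarySubgroup 2 R := by
  set u := (M : Matrix (Fin 2) (Fin 2) R) 0 0 with hu
  set v := (M : Matrix (Fin 2) (Fin 2) R) 1 1 with hv
  set b := (M : Matrix (Fin 2) (Fin 2) R) 0 1 with hb
  have hdet : u * v = 1 := by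
    have := M.prop
    rw [Matrix.det_fin_two] at this
    rw [← this, h]; ring
  have hMeq : M = E12 u * E21 (-v) * E12 u * E21 1 * E12 (-1) * E21 1 * E12 (v * b) := by
    apply Subtype.ext
    simp only [Matrix.SpecialLinearGroup.coe_mul, coe_E12, coe_E21]
    rw [Matrix.eta_fin_two (M : Matrix (Fin 2) (Fin 2) R), h]
    simp only [Matrix.mul_fin_two]
    ext i j
    fin_cases i <;> fin_cases j <;> simp
    · linear_combination u * hdet
    · linear_combination (b * u * v - b - 1) * hdet
    · linear_combination hdet
    · linear_combination v * b * hdet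
  rw [hMeq]
  exact mul_mem (mul_mem (mul_mem (mul_mem (mul_mem (mul_mem (E12_mem u) (E21_mem (-v)))
    (E12_mem u)) (E21_mem 1)) (E12_mem (-1))) (E21_mem 1)) (E12_mem (v * b))

end Helpers

lemma map_mem_elementary {R R' : Type} [CommRing R] [CommRing R'] (f : R →+* R')
    {M : Matrix.SpecialLinearGroup (Fin 2) R} (hM : M ∈ ElementarySubgroup 2 R) :
    Matrix.SpecialLinearGroup.map f M ∈ ElementarySubgroup 2 R' := by
  induction hM using Subgroup.closure_induction with
  | mem x hx =>
      obtain ⟨i, j, t, hij, hx⟩ := hx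
      refine Subgroup.subset_closure ⟨i, j, f t, hij, ?_⟩
      show f.mapMatrix (x : Matrix (Fin 2) (Fin 2) R) = _
      rw [hx]
      ext a b
      simp [Matrix.transvection, Matrix.map_apply, Matrix.add_apply, Matrix.one_apply,
        Matrix.single, apply_ite f]
  | one => simpa using one_mem _
  | mul x y _ _ hx hy => simpa using mul_mem hx hy
  | inv x _ hx => simpa using inv_mem hx

/-- Any localization of a special PID at a multiplicative set not containing `0`
is again a special PID. -/
theorem stmt_1 (D : Type) [CommRing D] (hD : IsSpecialPID D)
    (S : Submonoid D) (hS : (0 : D) ∉ S) :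
    IsSpecialPID (Localization S) := by
  obtain ⟨hdom, hpir, helem⟩ := hD
  haveI := hdom
  have hle : S ≤ nonZeroDivisors D := le_nonZeroDivisors_of_noZeroDivisors hS
  haveI hdomL : IsDomain (Localization S) := IsLocalization.isDomain_localization hle
  set L := Localization S with hL
  set f := algebraMap D L with hf
  refine ⟨hdomL, ⟨fun J => ?_⟩, ?_⟩
  · obtain ⟨g, hg⟩ := hpir.principal (J.comap f)
    refine ⟨f g, ?_⟩
    have hg' : J.comap f = Ideal.span {g} := hg
    rw [← IsLocalization.map_comap S L J, Ideal.under, hg', Ideal.map_span, Set.image_singleton]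
  · rw [IsElementaryGenerated, eq_top_iff]
    intro M _
    obtain ⟨a₁, c₁, s, ha, hc⟩ := IsLocalization.surj₂ S L
      ((M : Matrix (Fin 2) (Fin 2) L) 0 0) ((M : Matrix (Fin 2) (Fin 2) L) 1 0)
    obtain ⟨g, hg0'⟩ := hpir.principal (Ideal.span {a₁, c₁})
    have hg : Ideal.span {a₁, c₁} = Ideal.span {g} := hg0'
    have hsu : IsUnit (f s) := IsLocalization.map_units L s
    have hga : g ∣ a₁ := by
      rw [← Ideal.mem_span_singleton, ← hg]
      exact Ideal.subset_span (by simp)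
    have hgc : g ∣ c₁ := by
      rw [← Ideal.mem_span_singleton, ← hg]
      exact Ideal.subset_span (by simp)
    obtain ⟨a', ha'⟩ := hga
    obtain ⟨c', hc'⟩ := hgc
    have hgmem : g ∈ Ideal.span ({a₁, c₁} : Set D) := by
      rw [hg]; exact Ideal.mem_span_singleton_self g
    obtain ⟨x, y, hxy⟩ := Ideal.mem_span_pair.mp hgmem
    have hg0 : g ≠ 0 := by
      intro h0
      have ha0 : (M : Matrix (Fin 2) (Fin 2) L) 0 0 = 0 := by
        have : f a₁ = 0 := by rw [ha', h0, zero_mul, map_zero]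
        rcases mul_eq_zero.mp (ha.trans this) with h | h
        · exact h
        · exact absurd h hsu.ne_zero
      have hc0 : (M : Matrix (Fin 2) (Fin 2) L) 1 0 = 0 := by
        have : f c₁ = 0 := by rw [hc', h0, zero_mul, map_zero]
        rcases mul_eq_zero.mp (hc.trans this) with h | h
        · exact h
        · exact absurd h hsu.ne_zero
      have hdet := M.prop
      rw [Matrix.det_fin_two, ha0, hc0] at hdet
      simp at hdet
    have hxy1 : x * a' + y * c' = 1 := by
      apply mul_left_cancel₀ hg0
      rw [mul_one]
      linear_combination hxy - x * ha' - y * hc'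
    set K : Matrix.SpecialLinearGroup (Fin 2) D :=
      ⟨!![x, y; -c', a'], by rw [Matrix.det_fin_two_of]; linear_combination hxy1⟩ with hK
    have hKmem : K ∈ ElementarySubgroup 2 D := by
      rw [show ElementarySubgroup 2 D = ⊤ from helem]; trivial
    set K' := Matrix.SpecialLinearGroup.map f K with hK'
    have hK'mem : K' ∈ ElementarySubgroup 2 L := map_mem_elementary f hKmem
    have hN10 : ((K' * M : Matrix.SpecialLinearGroup (Fin 2) L) : Matrix (Fin 2) (Fin 2) L) 1 0
        = 0 := by
      have hent : ((K' * M : Matrix.SpecialLinearGroup (Fin 2) L) : Matrix (Fin 2) (Fin 2) L) 1 0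
          = f (-c') * (M : Matrix (Fin 2) (Fin 2) L) 0 0
            + f a' * (M : Matrix (Fin 2) (Fin 2) L) 1 0 := by
        rw [Matrix.SpecialLinearGroup.coe_mul, Matrix.mul_apply, Fin.sum_univ_two]
        have e1 : ((K' : Matrix (Fin 2) (Fin 2) L)) 1 0 = f (-c') := by
          show f (!![x, y; -c', a'] 1 0) = f (-c')
          norm_num
        have e2 : ((K' : Matrix (Fin 2) (Fin 2) L)) 1 1 = f a' := by
          show f (!![x, y; -c', a'] 1 1) = f a'
          norm_num
        rw [e1, e2]
      have h0 : ((K' * M : Matrix.SpecialLinearGroup (Fin 2) L) : Matrix (Fin 2) (Fin 2) L) 1 0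
          * f s = 0 := by
        rw [hent, add_mul, mul_assoc, mul_assoc, ha, hc, ← map_mul, ← map_mul, ← map_add]
        have : -c' * a₁ + a' * c₁ = 0 := by rw [ha', hc']; ring
        rw [this, map_zero]
      rcases mul_eq_zero.mp h0 with h | h
      · exact h
      · exact absurd h hsu.ne_zero
    have := upper_tri_mem (K' * M) hN10
    have hM : M = K'⁻¹ * (K' * M) := by rw [inv_mul_cancel_left]
    rw [hM]
    exact mul_mem (inv_mem hK'mem) this
end

section
/- If D is a special PID, then the Laurent series ring D((x)) is a special PID. -/
namespace Kopeiko

open PowerSeries HahnSeries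

attribute [local instance] Classical.propDecidable

variable {D : Type} [CommRing D]

/-! ### Division with remainder detection in power series -/

/-- Successive approximations to the quotient `G / F`, where `d` is the constant
coefficient of `F`. -/
noncomputable def divS (F G : D⟦X⟧) (d : D) : ℕ → D⟦X⟧
  | 0 => 0
  | k+1 => divS F G d k +
      PowerSeries.C (R := D) (if h : d ∣ (PowerSeries.coeff (R := D) k) (G - F * divS F G d k)
        then h.choose else 0) * PowerSeries.X ^ k

/-- The `k`-th coefficient of the approximate quotient. -/
noncomputable def divc (F G : D⟦X⟧) (d : D) (k : ℕ) : D :=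
  if h : d ∣ (PowerSeries.coeff (R := D) k) (G - F * divS F G d k) then h.choose else 0

lemma divS_succ (F G : D⟦X⟧) (d : D) (k : ℕ) :
    divS F G d (k+1) = divS F G d k + PowerSeries.C (R := D) (divc F G d k) * PowerSeries.X ^ k :=
  rfl

lemma divS_rem (F G : D⟦X⟧) (d : D) (hF : constantCoeff (R := D) F = d) (k : ℕ)
    (hdvd : ∀ j < k, d ∣ (PowerSeries.coeff (R := D) j) (G - F * divS F G d j)) :
    ∀ j < k, (PowerSeries.coeff (R := D) j) (G - F * divS F G d k) = 0 := by
  induction k with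
  | zero => intro j hj; omega
  | succ k ih =>
    intro j hj
    have hkey : G - F * divS F G d (k+1)
        = (G - F * divS F G d k) - (F * PowerSeries.C (R := D) (divc F G d k)) * PowerSeries.X ^ k := by
      rw [divS_succ]; ring
    rw [hkey, map_sub, PowerSeries.coeff_mul_X_pow']
    rcases Nat.lt_or_ge j k with hjk | hjk
    · rw [ih (fun i hi => hdvd i (hi.trans (Nat.lt_succ_self k))) j hjk, if_neg (by omega)]
      ring
    · have hj' : j = k := by omega
      subst hj'
      rw [if_pos le_rfl, Nat.sub_self]
      have hd : d ∣ (PowerSeries.coeff (R := D) j) (G - F * divS F G d j) := hdvd j (Nat.lt_succ_self j)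
      have hspec := hd.choose_spec
      rw [coeff_zero_eq_constantCoeff, map_mul, constantCoeff_C, hF]
      simp only [divc, dif_pos hd]
      exact sub_eq_zero_of_eq hspec

theorem div_cases (F G : D⟦X⟧) (d : D) (hF : constantCoeff (R := D) F = d) :
    (∃ h, G = F * h) ∨
      ∃ (t H : D⟦X⟧) (k : ℕ), G - F * t = PowerSeries.X ^ k * H ∧
        ¬ d ∣ constantCoeff (R := D) H := by
  by_cases hall : ∀ k, d ∣ (PowerSeries.coeff (R := D) k) (G - F * divS F G d k)
  · left
    refine ⟨PowerSeries.mk (divc F G d), ?_⟩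
    ext j
    have h1 : (PowerSeries.coeff (R := D) j) (G - F * divS F G d (j+1)) = 0 :=
      divS_rem F G d hF (j+1) (fun i _ => hall i) j (Nat.lt_succ_self j)
    have hSc : ∀ k m : ℕ, (PowerSeries.coeff (R := D) m) (divS F G d k)
        = if m < k then divc F G d m else 0 := by
      intro k
      induction k with
      | zero => intro m; simp [divS]
      | succ k ih =>
        intro m
        rw [divS_succ, map_add, PowerSeries.coeff_mul_X_pow', ih m, PowerSeries.coeff_C]
        split_ifs
        all_goals try ring
        all_goals try (exfalso; omega)
        all_goals (rw [show m = k by omega]; try ring)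
    have h2 : (PowerSeries.coeff (R := D) j) (F * PowerSeries.mk (divc F G d))
        = (PowerSeries.coeff (R := D) j) (F * divS F G d (j+1)) := by
      rw [PowerSeries.coeff_mul, PowerSeries.coeff_mul]
      refine Finset.sum_congr rfl ?_
      rintro ⟨a, b⟩ hab
      rw [Finset.HasAntidiagonal.mem_antidiagonal] at hab
      have hb : b < j + 1 := by omega
      rw [PowerSeries.coeff_mk, hSc (j+1) b, if_pos hb]
    rw [map_sub, sub_eq_zero] at h1
    rw [h2, ← h1]
  · right
    push_neg at hall
    set k := Nat.find hall with hk
    have hspec : ¬ d ∣ (PowerSeries.coeff (R := D) k) (G - F * divS F G d k) := Nat.find_spec hall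
    have hmin : ∀ j < k, d ∣ (PowerSeries.coeff (R := D) j) (G - F * divS F G d j) := by
      intro j hj
      by_contra h
      exact absurd (Nat.find_min hall hj) (by exact fun a => a h)
    have hvan : ∀ j < k, (PowerSeries.coeff (R := D) j) (G - F * divS F G d k) = 0 :=
      divS_rem F G d hF k hmin
    have hXdvd : PowerSeries.X ^ k ∣ (G - F * divS F G d k) :=
      PowerSeries.X_pow_dvd_iff.mpr hvan
    obtain ⟨H, hH⟩ := hXdvd
    refine ⟨divS F G d k, H, k, hH, ?_⟩
    intro hd
    apply hspec
    rw [hH]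
    have : (PowerSeries.coeff (R := D) k) (PowerSeries.X ^ k * H) = constantCoeff (R := D) H := by
      have := PowerSeries.coeff_X_pow_mul H k 0
      simpa using this
    rw [this]
    exact hd


/-! ### Laurent series helpers -/

section Laurent

variable [IsDomain D]

/-- The inclusion of power series into Laurent series. -/
noncomputable abbrev ps : D⟦X⟧ →+* LaurentSeries D := HahnSeries.ofPowerSeries ℤ D

lemma ps_coeff_nat (F : D⟦X⟧) (n : ℕ) :
    (ps F).coeff (n : ℤ) = PowerSeries.coeff (R := D) n F :=
  HahnSeries.ofPowerSeries_apply_coeff F n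

lemma ps_coeff_zero (F : D⟦X⟧) : (ps F).coeff (0 : ℤ) = constantCoeff (R := D) F := by
  have := ps_coeff_nat F 0
  simpa using this

lemma ps_coeff_neg (F : D⟦X⟧) (n : ℤ) (hn : n < 0) : (ps F).coeff n = 0 := by
  rw [show ((ps F : LaurentSeries D)) = ((F : D⟦X⟧) : LaurentSeries D) from rfl,
    PowerSeries.coeff_coe, if_pos hn]

/-- `x^n` as a unit of the Laurent series ring. -/
noncomputable def xu (n : ℤ) : (LaurentSeries D)ˣ where
  val := HahnSeries.single n 1
  inv := HahnSeries.single (-n) 1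
  val_inv := by rw [HahnSeries.single_mul_single, add_neg_cancel, one_mul,
    HahnSeries.single_zero_one]
  inv_val := by rw [HahnSeries.single_mul_single, neg_add_cancel, one_mul,
    HahnSeries.single_zero_one]

lemma xu_val (n : ℤ) : ((xu n : (LaurentSeries D)ˣ) : LaurentSeries D)
    = HahnSeries.single n 1 := rfl

lemma xu_inv_val (n : ℤ) : (((xu n)⁻¹ : (LaurentSeries D)ˣ) : LaurentSeries D)
    = HahnSeries.single (-n) 1 := rfl

lemma ps_order_eq_zero {F : D⟦X⟧} (hd : constantCoeff (R := D) F ≠ 0) : (ps F).order = 0 := by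
  have hc0 : (ps F).coeff (0 : ℤ) = constantCoeff (R := D) F := ps_coeff_zero F
  have hf0 : ps F ≠ 0 := by
    intro h
    rw [h] at hc0
    exact hd (by simpa using hc0.symm)
  have h1 : (ps F).order ≤ 0 := HahnSeries.order_le_of_coeff_ne_zero (by rw [hc0]; exact hd)
  have h2 : ¬ (ps F).order < 0 := by
    intro h
    exact (mt HahnSeries.coeff_order_eq_zero.mp hf0) (ps_coeff_neg F _ h)
  omega

lemma isUnit_const_of_isUnit_ps {F : D⟦X⟧} (hd : constantCoeff (R := D) F ≠ 0)
    (h : IsUnit (ps F)) : IsUnit (constantCoeff (R := D) F) := by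
  have horder : (ps F).order = 0 := ps_order_eq_zero hd
  obtain ⟨p, hp⟩ := h.exists_right_inv
  have hf0 : ps F ≠ 0 := by
    intro h0
    rw [h0, zero_mul] at hp
    exact one_ne_zero hp.symm
  have hp0 : p ≠ 0 := by
    rintro rfl
    rw [mul_zero] at hp
    exact one_ne_zero hp.symm
  have horderp : p.order = 0 := by
    have hmul := HahnSeries.order_mul hf0 hp0
    rw [hp, HahnSeries.order_one, horder, zero_add] at hmul
    exact hmul.symm
  have key := HahnSeries.coeff_mul_order_add_order (ps F) p
  rw [hp, horder, horderp, add_zero] at key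
  have h1 : (1 : LaurentSeries D).coeff (0 : ℤ) = 1 := by
    rw [← HahnSeries.single_zero_one, HahnSeries.coeff_single_same]
  rw [h1] at key
  rw [HahnSeries.leadingCoeff_eq, HahnSeries.leadingCoeff_eq, horder, horderp,
    ps_coeff_zero] at key
  exact IsUnit.of_mul_eq_one _ key.symm

/-- Every nonzero Laurent series lands in the image of `ps` after multiplying
by a power of `x`. -/
lemma ps_powerSeriesPart_mem {g : LaurentSeries D} (I : Ideal (LaurentSeries D)) (hg : g ∈ I) :
    ps g.powerSeriesPart ∈ I := by
  have h := LaurentSeries.ofPowerSeries_powerSeriesPart g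
  rw [show HahnSeries.ofPowerSeries ℤ D g.powerSeriesPart = ps g.powerSeriesPart from rfl] at h
  rw [h]
  exact Ideal.mul_mem_left _ _ hg

theorem pid_laurent [IsPrincipalIdealRing D] : IsPrincipalIdealRing (LaurentSeries D) := by
  constructor
  intro I
  set J : Ideal D⟦X⟧ := I.comap ps with hJ
  set A : Ideal D := J.map (constantCoeff (R := D)) with hA
  have hsurj : Function.Surjective (constantCoeff (R := D)) := fun a => ⟨PowerSeries.C (R := D) a, by simp⟩
  obtain ⟨d, hd⟩ := (IsPrincipalIdealRing.principal A).principal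
  by_cases hd0 : d = 0
  · -- then I = ⊥
    subst hd0
    constructor
    refine ⟨0, ?_⟩
    rw [Ideal.submodule_span_eq,
      show Ideal.span {(0 : LaurentSeries D)} = ⊥ from Ideal.span_singleton_eq_bot.mpr rfl]
    ext g
    simp only [Ideal.mem_bot]
    constructor
    · intro hg
      by_contra hg0
      have hmem : ps g.powerSeriesPart ∈ I := ps_powerSeriesPart_mem I hg
      have : constantCoeff (R := D) g.powerSeriesPart ∈ A := Ideal.mem_map_of_mem _ hmem
      rw [hd, show Submodule.span D {(0 : D)} = ⊥ from Submodule.span_singleton_eq_bot.mpr rfl,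
        Submodule.mem_bot] at this
      have hne : constantCoeff (R := D) g.powerSeriesPart ≠ 0 := by
        rw [← coeff_zero_eq_constantCoeff_apply, LaurentSeries.powerSeriesPart_coeff,
          Nat.cast_zero, add_zero]
        exact mt HahnSeries.coeff_order_eq_zero.mp hg0
      exact hne this
    · rintro rfl; exact I.zero_mem
  · -- d ≠ 0 : I = span {ps F}
    have hdA : d ∈ A := by rw [hd]; exact Submodule.mem_span_singleton_self d
    obtain ⟨F, hFJ, hFd⟩ := (Ideal.mem_map_iff_of_surjective _ hsurj).mp hdA
    constructor
    refine ⟨ps F, ?_⟩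
    rw [Ideal.submodule_span_eq]
    apply le_antisymm
    · -- I ≤ span
      intro g hg
      by_cases hg0 : g = 0
      · subst hg0; exact Ideal.zero_mem _
      set G := g.powerSeriesPart with hG
      have hGJ : ps G ∈ I := ps_powerSeriesPart_mem I hg
      rcases div_cases F G d hFd with ⟨h, hh⟩ | ⟨t, H, k, heq, hnd⟩
      · rw [Ideal.mem_span_singleton]
        refine ⟨HahnSeries.single g.order 1 * ps h, ?_⟩
        have hgr := LaurentSeries.single_order_mul_powerSeriesPart g
        conv_lhs => rw [← hgr]
        rw [← hG, hh, map_mul]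
        ring
      · exfalso
        have hmem : ps (PowerSeries.X ^ k * H) ∈ I := by
          rw [← heq, map_sub, map_mul]
          exact Ideal.sub_mem _ hGJ (Ideal.mul_mem_right _ _ (Ideal.mem_comap.mp hFJ))
        have hH : ps H ∈ I := by
          have : ps H = HahnSeries.single (-(k : ℤ)) 1 * ps (PowerSeries.X ^ k * H) := by
            rw [map_mul, show (ps ((PowerSeries.X : D⟦X⟧) ^ k)) = HahnSeries.single (k : ℤ) 1 from
              HahnSeries.ofPowerSeries_X_pow (Γ := ℤ) k, ← mul_assoc, HahnSeries.single_mul_single,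
              neg_add_cancel, one_mul, HahnSeries.single_zero_one, one_mul]
          rw [this]
          exact Ideal.mul_mem_left _ _ hmem
        have : constantCoeff (R := D) H ∈ A := Ideal.mem_map_of_mem _ hH
        rw [hd, Ideal.submodule_span_eq, Ideal.mem_span_singleton] at this
        exact hnd this
    · -- span ≤ I
      rw [Ideal.span_le, Set.singleton_subset_iff]
      exact Ideal.mem_comap.mp hFJ

end Laurent


/-! ### SL₂ toolkit -/

section SL2
variable {A : Type} [CommRing A]

/-- `SL₂` over a commutative ring. -/
abbrev SL2 (A : Type) [CommRing A] := Matrix.SpecialLinearGroup (Fin 2) A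

/-- Shorthand constructor for elements of `SL₂`. -/
def mkSL (a b c d : A) (h : a * d - b * c = 1) : SL2 A :=
  ⟨!![a, b; c, d], by rw [Matrix.det_fin_two_of]; exact h⟩

@[simp] lemma mkSL_coe (a b c d : A) (h) : (mkSL a b c d h : Matrix (Fin 2) (Fin 2) A)
    = !![a, b; c, d] := rfl

lemma transvection01 (t : A) : Matrix.transvection (0 : Fin 2) 1 t = !![1, t; 0, 1] := by
  ext i j
  fin_cases i <;> fin_cases j <;>
    simp [Matrix.transvection, Matrix.single, Matrix.one_apply]

lemma transvection10 (t : A) : Matrix.transvection (1 : Fin 2) 0 t = !![1, 0; t, 1] := by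
  ext i j
  fin_cases i <;> fin_cases j <;>
    simp [Matrix.transvection, Matrix.single, Matrix.one_apply]

lemma mem_E_of_transvection {M : SL2 A} (i j : Fin 2) (hij : i ≠ j) (t : A)
    (h : (M : Matrix (Fin 2) (Fin 2) A) = Matrix.transvection i j t) :
    M ∈ ElementarySubgroup 2 A :=
  Subgroup.subset_closure ⟨i, j, t, hij, h⟩

/-- Upper elementary matrix. -/
def E12 (t : A) : SL2 A := mkSL 1 t 0 1 (by ring)

/-- Lower elementary matrix. -/
def E21 (t : A) : SL2 A := mkSL 1 0 t 1 (by ring)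

lemma E12_mem (t : A) : E12 t ∈ ElementarySubgroup 2 A :=
  mem_E_of_transvection 0 1 (by decide) t (by rw [transvection01]; rfl)

lemma E21_mem (t : A) : E21 t ∈ ElementarySubgroup 2 A :=
  mem_E_of_transvection 1 0 (by decide) t (by rw [transvection10]; rfl)

/-- The standard symplectic rotation. -/
def W : SL2 A := mkSL 0 1 (-1) 0 (by ring)

lemma W_eq : (W : SL2 A) = E12 1 * E21 (-1) * E12 1 := by
  apply Subtype.ext
  simp only [W, E12, E21, Matrix.SpecialLinearGroup.coe_mul, mkSL_coe, Matrix.mul_fin_two]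
  norm_num

lemma W_mem : (W : SL2 A) ∈ ElementarySubgroup 2 A := by
  rw [W_eq]
  exact mul_mem (mul_mem (E12_mem 1) (E21_mem (-1))) (E12_mem 1)

/-- Diagonal matrix `diag (u, u⁻¹)` for a unit `u`. -/
def Du (u : Aˣ) : SL2 A := mkSL (u : A) 0 0 ((u⁻¹ : Aˣ) : A) (by simp)

lemma Du_eq (u : Aˣ) : (Du u : SL2 A)
    = E12 (u : A) * E21 (-((u⁻¹ : Aˣ) : A)) * E12 (u : A) * E12 (-1) * E21 1 * E12 (-1) := by
  apply Subtype.ext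
  have h1 : (u : A) * ((u⁻¹ : Aˣ) : A) = 1 := u.mul_inv
  have h2 : ((u⁻¹ : Aˣ) : A) * (u : A) = 1 := u.inv_mul
  simp only [Du, E12, E21, Matrix.SpecialLinearGroup.coe_mul, mkSL_coe, Matrix.mul_fin_two]
  ext i j
  fin_cases i <;> fin_cases j <;> simp

lemma Du_mem (u : Aˣ) : (Du u : SL2 A) ∈ ElementarySubgroup 2 A := by
  rw [Du_eq]
  exact mul_mem (mul_mem (mul_mem (mul_mem (mul_mem (E12_mem _) (E21_mem _)) (E12_mem _))
    (E12_mem _)) (E21_mem _)) (E12_mem _)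

/-- Conjugation by `diag (1, c)` as an automorphism of `SL₂`. -/
def conjHom (c : Aˣ) : SL2 A →* SL2 A where
  toFun M := ⟨!![M.1 0 0, M.1 0 1 * ((c⁻¹ : Aˣ) : A); M.1 1 0 * (c : A), M.1 1 1], by
    rw [Matrix.det_fin_two_of]
    have hdet := M.2
    rw [Matrix.det_fin_two] at hdet
    have hc : ((c⁻¹ : Aˣ) : A) * (c : A) = 1 := c.inv_mul
    linear_combination hdet - M.1 0 1 * M.1 1 0 * hc⟩
  map_one' := by
    apply Subtype.ext
    ext i j
    fin_cases i <;> fin_cases j <;>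
      simp [Matrix.SpecialLinearGroup.coe_one, Matrix.one_apply]
  map_mul' M N := by
    apply Subtype.ext
    show _ = (_ : Matrix (Fin 2) (Fin 2) A) * _
    have hc : ((c⁻¹ : Aˣ) : A) * (c : A) = 1 := c.inv_mul
    ext i j
    fin_cases i <;> fin_cases j
    · simp [Matrix.mul_apply, Fin.sum_univ_two]
      linear_combination (-(M.1 0 1 * N.1 1 0)) * hc
    · simp [Matrix.mul_apply, Fin.sum_univ_two]
      try ring
    · simp [Matrix.mul_apply, Fin.sum_univ_two]
      try ring
    · simp [Matrix.mul_apply, Fin.sum_univ_two]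
      linear_combination (-(M.1 1 0 * N.1 0 1)) * hc

@[simp] lemma conjHom_coe (c : Aˣ) (M : SL2 A) :
    (conjHom c M : Matrix (Fin 2) (Fin 2) A)
      = !![M.1 0 0, M.1 0 1 * ((c⁻¹ : Aˣ) : A); M.1 1 0 * (c : A), M.1 1 1] := rfl

/-- A group homomorphism mapping elementary generators to elementary matrices
preserves the elementary subgroup. -/
lemma hom_mem_E {B : Type} [CommRing B] (Φ : SL2 A →* SL2 B)
    (hgen : ∀ (M : SL2 A) (i j : Fin 2) (t : A), i ≠ j →
      (M : Matrix (Fin 2) (Fin 2) A) = Matrix.transvection i j t →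
      Φ M ∈ ElementarySubgroup 2 B)
    {M : SL2 A} (hM : M ∈ ElementarySubgroup 2 A) : Φ M ∈ ElementarySubgroup 2 B := by
  refine Subgroup.closure_induction ?_ ?_ ?_ ?_ hM
  · rintro x ⟨i, j, t, hij, hx⟩
    exact hgen x i j t hij hx
  · rw [map_one]; exact one_mem _
  · intro x y _ _ hx hy
    rw [map_mul]; exact mul_mem hx hy
  · intro x _ hx
    rw [map_inv]; exact inv_mem hx

lemma map_mem_E {B : Type} [CommRing B] (ψ : A →+* B) {M : SL2 A}
    (hM : M ∈ ElementarySubgroup 2 A) :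
    Matrix.SpecialLinearGroup.map ψ M ∈ ElementarySubgroup 2 B := by
  refine hom_mem_E _ ?_ hM
  intro M i j t hij hx
  refine mem_E_of_transvection i j hij (ψ t) ?_
  have : (Matrix.SpecialLinearGroup.map ψ M : Matrix (Fin 2) (Fin 2) B)
      = (M : Matrix (Fin 2) (Fin 2) A).map ψ := by
    simp [Matrix.SpecialLinearGroup.map, RingHom.mapMatrix_apply]
    rfl
  rw [this, hx]
  ext i' j'
  simp only [Matrix.transvection, Matrix.map_apply, Matrix.add_apply, Matrix.one_apply,
    Matrix.single, Matrix.of_apply]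
  split_ifs <;> simp

lemma conjHom_mem_E (c : Aˣ) {M : SL2 A} (hM : M ∈ ElementarySubgroup 2 A) :
    conjHom c M ∈ ElementarySubgroup 2 A := by
  refine hom_mem_E _ ?_ hM
  intro M i j t hij hx
  fin_cases i <;> fin_cases j <;>
    simp only [Fin.zero_eta, Fin.mk_one, Fin.isValue] at hx hij
  · exact absurd rfl hij
  · refine mem_E_of_transvection 0 1 (by decide) (t * ((c⁻¹ : Aˣ) : A)) ?_
    rw [transvection01] at hx
    rw [conjHom_coe, hx, transvection01]
    norm_num
  · refine mem_E_of_transvection 1 0 (by decide) (t * (c : A)) ?_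
    rw [transvection10] at hx
    rw [conjHom_coe, hx, transvection10]
    norm_num
  · exact absurd rfl hij

/-! ### Rows and elementary operations -/

/-- A row is unimodular if its entries generate the unit ideal. -/
def Unimod (r : Fin 2 → A) : Prop := ∃ p q, r 0 * p + r 1 * q = 1

/-- Two rows are related if an elementary matrix transforms one into the other. -/
def Rel (r r' : Fin 2 → A) : Prop :=
  ∃ M : SL2 A, M ∈ ElementarySubgroup 2 A ∧
    Matrix.vecMul r (M : Matrix (Fin 2) (Fin 2) A) = r'

lemma vecMul_apply (r : Fin 2 → A) (M : Matrix (Fin 2) (Fin 2) A) (j : Fin 2) :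
    Matrix.vecMul r M j = r 0 * M 0 j + r 1 * M 1 j := by
  simp [Matrix.vecMul, dotProduct, Fin.sum_univ_two]

lemma Rel.trans {r r' r'' : Fin 2 → A} (h : Rel r r') (h' : Rel r' r'') : Rel r r'' := by
  obtain ⟨M, hM, hv⟩ := h
  obtain ⟨N, hN, hv'⟩ := h'
  exact ⟨M * N, mul_mem hM hN, by
    rw [Matrix.SpecialLinearGroup.coe_mul, ← Matrix.vecMul_vecMul, hv, hv']⟩

lemma Rel.symm {r r' : Fin 2 → A} (h : Rel r r') : Rel r' r := by
  obtain ⟨M, hM, hv⟩ := h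
  refine ⟨M⁻¹, inv_mem hM, ?_⟩
  rw [← hv, Matrix.vecMul_vecMul]
  have h1 : (M : Matrix (Fin 2) (Fin 2) A) * ((M⁻¹ : SL2 A) : Matrix (Fin 2) (Fin 2) A)
      = 1 := by
    rw [← Matrix.SpecialLinearGroup.coe_mul, mul_inv_cancel,
      Matrix.SpecialLinearGroup.coe_one]
  rw [h1, Matrix.vecMul_one]

lemma Rel.unimod {r r' : Fin 2 → A} (h : Rel r r') (hu : Unimod r) : Unimod r' := by
  obtain ⟨N, _, hv⟩ := h.symm
  obtain ⟨p, q, hpq⟩ := hu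
  refine ⟨N.1 0 0 * p + N.1 0 1 * q, N.1 1 0 * p + N.1 1 1 * q, ?_⟩
  have h0 : r 0 = r' 0 * N.1 0 0 + r' 1 * N.1 1 0 := by rw [← hv, vecMul_apply]
  have h1 : r 1 = r' 0 * N.1 0 1 + r' 1 * N.1 1 1 := by rw [← hv, vecMul_apply]
  rw [h0, h1] at hpq
  linear_combination hpq

lemma rel_pair {f g : A} (M : SL2 A) (hM : M ∈ ElementarySubgroup 2 A) :
    Rel ![f, g] ![f * M.1 0 0 + g * M.1 1 0, f * M.1 0 1 + g * M.1 1 1] := by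
  refine ⟨M, hM, ?_⟩
  ext j
  rw [vecMul_apply]
  fin_cases j <;> simp

lemma rel_addRight (f g t : A) : Rel ![f, g] ![f, g + f * t] := by
  have h := rel_pair (f := f) (g := g) (E12 t) (E12_mem t)
  simp only [E12, mkSL_coe] at h
  convert h using 2 <;> simp <;> ring

lemma rel_addLeft (f g t : A) : Rel ![f, g] ![f + g * t, g] := by
  have h := rel_pair (f := f) (g := g) (E21 t) (E21_mem t)
  simp only [E21, mkSL_coe] at h
  convert h using 2 <;> simp <;> ring

lemma rel_swap (f g : A) : Rel ![f, g] ![-g, f] := by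
  have h := rel_pair (f := f) (g := g) W W_mem
  simp only [W, mkSL_coe] at h
  convert h using 2 <;> simp <;> ring

lemma rel_unit (f g : A) (u : Aˣ) : Rel ![f, g] ![f * (u : A), g * ((u⁻¹ : Aˣ) : A)] := by
  have h := rel_pair (f := f) (g := g) (Du u) (Du_mem u)
  simp only [Du, mkSL_coe] at h
  convert h using 2 <;> simp

lemma rel_of_isUnit {f : A} (g : A) (hf : IsUnit f) : Rel ![f, g] ![1, 0] := by
  obtain ⟨u, rfl⟩ := hf
  have r1 := rel_addRight (u : A) g (((u⁻¹ : Aˣ) : A) * (1 - g))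
  have e1 : g + (u : A) * (((u⁻¹ : Aˣ) : A) * (1 - g)) = 1 := by
    rw [← mul_assoc, u.mul_inv, one_mul]; ring
  rw [e1] at r1
  have r2 := rel_addLeft (u : A) 1 (-(u : A))
  have e2 : (u : A) + 1 * (-(u : A)) = 0 := by ring
  rw [e2] at r2
  have r3 := rel_swap (0 : A) 1
  have e3 : -(1 : A) = ((-1 : Aˣ) : A) := by simp
  have r4 := rel_unit (-1 : A) (0 : A) (-1 : Aˣ)
  have e4 : (-1 : A) * ((-1 : Aˣ) : A) = 1 := by simp
  have e5 : (0 : A) * (((-1 : Aˣ)⁻¹ : Aˣ) : A) = 0 := by ring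
  rw [e4, e5] at r4
  exact ((r1.trans r2).trans r3).trans r4

/-- If every unimodular row is elementarily equivalent to `(1,0)`, then
`SL₂ = E₂`. -/
theorem elementary_of_rows
    (hrow : ∀ r : Fin 2 → A, Unimod r → Rel r ![1, 0]) :
    IsElementaryGenerated 2 A := by
  rw [IsElementaryGenerated, eq_top_iff]
  intro M _
  set r : Fin 2 → A := fun j => M.1 0 j with hr
  have hdet := M.2
  rw [Matrix.det_fin_two] at hdet
  have hu : Unimod r := ⟨M.1 1 1, -(M.1 1 0), by simp only [hr]; linear_combination hdet⟩
  obtain ⟨N, hN, hvec⟩ := hrow r hu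
  have hB : ∀ j, (M * N).1 0 j = Matrix.vecMul r (N : Matrix (Fin 2) (Fin 2) A) j := by
    intro j
    rw [Matrix.SpecialLinearGroup.coe_mul, Matrix.mul_apply, vecMul_apply,
      Fin.sum_univ_two]
  have hB00 : (M * N).1 0 0 = 1 := by rw [hB 0, hvec]; rfl
  have hB01 : (M * N).1 0 1 = 0 := by rw [hB 1, hvec]; rfl
  have hdet2 := (M * N).2
  rw [Matrix.det_fin_two, hB00, hB01] at hdet2
  have hB11 : (M * N).1 1 1 = 1 := by linear_combination hdet2
  have hBmem : (M * N) ∈ ElementarySubgroup 2 A := by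
    refine mem_E_of_transvection 1 0 (by decide) ((M * N).1 1 0) ?_
    rw [transvection10]
    ext i j
    fin_cases i <;> fin_cases j <;> simp [hB00, hB01, hB11]
  have hfin : M = (M * N) * N⁻¹ := by group
  rw [hfin]
  exact mul_mem hBmem (inv_mem hN)

end SL2


/-! ### The main induction -/

section Main

variable [IsDomain D] [IsPrincipalIdealRing D]

theorem key (hDE : IsElementaryGenerated 2 D) :
    ∀ d : D, d ≠ 0 → ∀ F : D⟦X⟧, constantCoeff (R := D) F = d →
      ∀ g : LaurentSeries D, Unimod ![ps F, g] → Rel ![ps F, g] ![1, 0] := by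
  haveI : WfDvdMonoid D := IsNoetherianRing.wfDvdMonoid
  have hDE' : ElementarySubgroup 2 D = ⊤ := hDE
  refine fun d => WellFounded.induction (wellFounded_dvdNotUnit (α := D))
    (C := fun d => d ≠ 0 → ∀ F : D⟦X⟧, constantCoeff (R := D) F = d →
      ∀ g : LaurentSeries D, Unimod ![ps F, g] → Rel ![ps F, g] ![1, 0]) d ?_
  clear d
  intro d IH hd0 F hF g huni
  by_cases hdu : IsUnit d
  · -- `F` is a unit, finish
    have hFu : IsUnit F := PowerSeries.isUnit_iff_constantCoeff.mpr (hF ▸ hdu)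
    exact rel_of_isUnit g (hFu.map ps)
  · have hdF : constantCoeff (R := D) F ≠ 0 := hF ▸ hd0
    have hnotunit : ¬ IsUnit (ps F) := by
      intro hu
      exact hdu (hF ▸ isUnit_const_of_isUnit_ps hdF hu)
    by_cases hg0 : g = 0
    · exfalso
      obtain ⟨p, q, hpq⟩ := huni
      simp only [Matrix.cons_val_zero, Matrix.cons_val_one, Matrix.head_cons, hg0] at hpq
      exact hnotunit (IsUnit.of_mul_eq_one p (by linear_combination hpq))
    · set G := g.powerSeriesPart with hG
      set o := g.order with ho
      have hgr : HahnSeries.single o 1 * ps G = g := by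
        rw [ho, hG]; exact LaurentSeries.single_order_mul_powerSeriesPart g
      rcases div_cases F G d hF with ⟨h, hh⟩ | ⟨t, H, k, heq, hnd⟩
      · -- `ps F` divides `g`, so `ps F` is a unit: contradiction
        exfalso
        have hdiv : g = ps F * (HahnSeries.single o 1 * ps h) := by
          rw [← hgr, hh, map_mul]; ring
        obtain ⟨p, q, hpq⟩ := huni
        simp only [Matrix.cons_val_zero, Matrix.cons_val_one, Matrix.head_cons] at hpq
        rw [hdiv] at hpq
        exact hnotunit (IsUnit.of_mul_eq_one
          (p + HahnSeries.single o 1 * ps h * q) (by linear_combination hpq))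
      · -- perform the elementary reduction step
        set m := o + (k : ℤ) with hm
        set b := constantCoeff (R := D) H with hb
        have step1 := rel_addRight (ps F) g (HahnSeries.single o 1 * ps (-t))
        have hsingle : ∀ a : ℤ, HahnSeries.single a (1 : D) * HahnSeries.single (-a) 1
            = (1 : LaurentSeries D) := by
          intro a
          rw [HahnSeries.single_mul_single, add_neg_cancel, one_mul, HahnSeries.single_zero_one]
        have e1 : g + ps F * (HahnSeries.single o 1 * ps (-t))
            = HahnSeries.single m 1 * ps H := by
          have h2 : ps (G - F * t) = ps G - ps F * ps t := by rw [map_sub, map_mul]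
          calc g + ps F * (HahnSeries.single o 1 * ps (-t))
              = HahnSeries.single o 1 * (ps G - ps F * ps t) := by
                rw [← hgr, map_neg]; ring
            _ = HahnSeries.single o 1 * ps (PowerSeries.X ^ k * H) := by
                rw [← h2, heq]
            _ = HahnSeries.single o 1 * (HahnSeries.single (k : ℤ) 1 * ps H) := by
                rw [map_mul, show (ps ((PowerSeries.X : D⟦X⟧) ^ k))
                  = HahnSeries.single (k : ℤ) 1 from HahnSeries.ofPowerSeries_X_pow (Γ := ℤ) k]
            _ = HahnSeries.single m 1 * ps H := by
                rw [← mul_assoc, HahnSeries.single_mul_single, one_mul, hm]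
        rw [e1] at step1
        set g' : LaurentSeries D := HahnSeries.single m 1 * ps H with hg'
        -- gcd data in D
        obtain ⟨e, he⟩ := (IsPrincipalIdealRing.principal (Ideal.span {d, b})).principal
        rw [Ideal.submodule_span_eq] at he
        have hd_mem : d ∈ Ideal.span {d, b} := Ideal.subset_span (by simp)
        have hb_mem : b ∈ Ideal.span {d, b} := Ideal.subset_span (by simp)
        rw [he, Ideal.mem_span_singleton] at hd_mem hb_mem
        obtain ⟨d', hd'⟩ := hd_mem
        obtain ⟨b', hb'⟩ := hb_mem
        have he_mem : e ∈ Ideal.span {d, b} := by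
          rw [he]; exact Ideal.mem_span_singleton_self e
        obtain ⟨p', q', hpq'⟩ := Ideal.mem_span_pair.mp he_mem
        have he0 : e ≠ 0 := fun h => hd0 (by rw [hd', h, zero_mul])
        have hdet : p' * d' + q' * b' = 1 := by
          apply mul_left_cancel₀ he0
          rw [mul_one]
          linear_combination hpq' - p' * hd' - q' * hb'
        have hd'nu : ¬ IsUnit d' := by
          intro hu
          obtain ⟨v, hv⟩ := hu
          apply hnd
          have hde : e = d * ((v⁻¹ : Dˣ) : D) := by
            rw [hd', ← hv, mul_assoc, v.mul_inv, mul_one]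
          exact dvd_trans ⟨((v⁻¹ : Dˣ) : D), hde⟩ ⟨b', hb'⟩
        -- the conjugated SL₂(D) matrix
        set M : SL2 D := mkSL p' (-b') q' d' (by linear_combination hdet) with hM
        have hME : M ∈ ElementarySubgroup 2 D := by
          have : M ∈ (⊤ : Subgroup (SL2 D)) := trivial
          rwa [← hDE'] at this
        set cst : D →+* LaurentSeries D := (ps (D := D)).comp (PowerSeries.C (R := D)) with hcst
        set N := conjHom (xu (-m)) (Matrix.SpecialLinearGroup.map cst M) with hN
        have hNE : N ∈ ElementarySubgroup 2 (LaurentSeries D) :=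
          conjHom_mem_E _ (map_mem_E cst hME)
        have hmap : ∀ i j, (Matrix.SpecialLinearGroup.map cst M).1 i j = cst (M.1 i j) := by
          intro i j
          simp [Matrix.SpecialLinearGroup.map, RingHom.mapMatrix_apply, Matrix.map_apply]
          rfl
        have hN00 : N.1 0 0 = ps (PowerSeries.C (R := D) p') := by
          rw [hN, conjHom_coe]
          simp only [Matrix.cons_val', Matrix.cons_val_zero, Matrix.empty_val',
            Matrix.cons_val_fin_one, Matrix.of_apply]
          rw [hmap 0 0]
          simp [hM, hcst]
        have hN10 : N.1 1 0 = ps (PowerSeries.C (R := D) q') * HahnSeries.single (-m) 1 := by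
          rw [hN, conjHom_coe]
          simp only [Matrix.cons_val', Matrix.cons_val_zero, Matrix.cons_val_one,
            Matrix.head_cons, Matrix.empty_val', Matrix.cons_val_fin_one, Matrix.of_apply,
            Matrix.head_fin_const]
          rw [hmap 1 0, xu_val]
          simp [hM, hcst]
        have step2 := rel_pair (f := ps F) (g := g') N hNE
        set F'' : D⟦X⟧ := F * PowerSeries.C (R := D) p' + H * PowerSeries.C (R := D) q' with hF''def
        have e2 : ps F * N.1 0 0 + g' * N.1 1 0 = ps F'' := by
          rw [hN00, hN10, hg', hF''def, map_add, map_mul, map_mul]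
          have : HahnSeries.single m 1 * ps H * (ps (PowerSeries.C (R := D) q')
              * HahnSeries.single (-m) 1)
              = ps H * ps (PowerSeries.C (R := D) q')
                * (HahnSeries.single m 1 * HahnSeries.single (-m) 1) := by ring
          rw [this, hsingle m, mul_one]
          try ring
        have hF''coeff : constantCoeff (R := D) F'' = e := by
          rw [hF''def, map_add, map_mul, map_mul, constantCoeff_C, constantCoeff_C, hF, ← hb]
          linear_combination hpq'
        rw [e2] at step2
        set g'' := ps F * N.1 0 1 + g' * N.1 1 1 with hg''
        have hrel : Rel ![ps F, g] ![ps F'', g''] := step1.trans step2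
        have huni'' : Unimod ![ps F'', g''] := hrel.unimod huni
        have hDvdNot : DvdNotUnit e d := ⟨he0, d', hd'nu, hd'⟩
        exact hrel.trans (IH e hDvdNot he0 F'' hF''coeff g'' huni'')

theorem rows (hDE : IsElementaryGenerated 2 D) :
    ∀ r : Fin 2 → LaurentSeries D, Unimod r → Rel r ![1, 0] := by
  intro r huni
  have hr : r = ![r 0, r 1] := by funext i; fin_cases i <;> rfl
  rw [hr] at huni ⊢
  by_cases h0 : r 0 = 0
  · have h1 : IsUnit (r 1) := by
      obtain ⟨p, q, h⟩ := huni
      simp only [Matrix.cons_val_zero, Matrix.cons_val_one, Matrix.head_cons, h0] at h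
      exact IsUnit.of_mul_eq_one q (by linear_combination h)
    exact (rel_swap (r 0) (r 1)).trans (rel_of_isUnit (r 0) h1.neg)
  · set o := (r 0).order with ho
    set F := (r 0).powerSeriesPart with hFdef
    have hgr : HahnSeries.single o 1 * ps F = r 0 :=
      LaurentSeries.single_order_mul_powerSeriesPart (r 0)
    have hd : constantCoeff (R := D) F ≠ 0 := by
      rw [hFdef, ← coeff_zero_eq_constantCoeff_apply, LaurentSeries.powerSeriesPart_coeff,
        Nat.cast_zero, add_zero]
      exact mt HahnSeries.coeff_order_eq_zero.mp h0
    have rel1 := rel_unit (r 0) (r 1) (xu (-o))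
    rw [xu_val] at rel1
    have e2 : (((xu (-o))⁻¹ : (LaurentSeries D)ˣ) : LaurentSeries D)
        = HahnSeries.single o 1 := by rw [xu_inv_val, neg_neg]
    rw [e2] at rel1
    have e1 : r 0 * HahnSeries.single (-o) 1 = ps F := by
      rw [← hgr]
      have : HahnSeries.single o (1:D) * ps F * HahnSeries.single (-o) 1
          = ps F * (HahnSeries.single o 1 * HahnSeries.single (-o) 1) := by ring
      rw [this, HahnSeries.single_mul_single, add_neg_cancel, one_mul,
        HahnSeries.single_zero_one, mul_one]
    rw [e1] at rel1
    have huni' : Unimod ![ps F, r 1 * HahnSeries.single o 1] := rel1.unimod huni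
    exact rel1.trans (key hDE (constantCoeff (R := D) F) hd F rfl _ huni')

end Main

end Kopeiko

/-- Kopeiko's lemma: if `D` is a special PID, then the formal Laurent series ring
`D((x))` is a special PID. -/
theorem stmt_2 (D : Type) [CommRing D] (hD : IsSpecialPID D) :
    IsSpecialPID (LaurentSeries D) := by
  obtain ⟨hdom, hpid, hE2⟩ := hD
  haveI := hdom
  haveI := hpid
  refine ⟨inferInstance, Kopeiko.pid_laurent, ?_⟩
  exact Kopeiko.elementary_of_rows (Kopeiko.rows hE2)
end

section
/- Let R be a Noetherian commutative ring of Krull dimension at most 1 with SL_2(R) = E_2(R). Then SL_n(R) = E_n(R) for every n ≥ 2. -/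
variable {R : Type} [CommRing R]


/-- Coset avoidance: given a finite set of pairwise incomparable primes, none containing
both `a` and `c`, we can choose `x` with `a + x*c` outside all of them. -/
lemma coset_avoidance (S : Finset (Ideal R))
    (hprime : ∀ p ∈ S, p.IsPrime)
    (hinc : ∀ p ∈ S, ∀ q ∈ S, p ≠ q → ¬ p ≤ q)
    (a c : R) (hac : ∀ p ∈ S, ¬ (a ∈ p ∧ c ∈ p)) :
    ∃ x : R, ∀ p ∈ S, a + x * c ∉ p := by
  classical
  induction S using Finset.cons_induction_on with
  | empty => exact ⟨0, by simp⟩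
  | @cons p S' hpS' ih =>
    obtain ⟨x, hx⟩ := ih (fun q hq => hprime q (Finset.mem_cons_of_mem hq))
      (fun q hq r hr => hinc q (Finset.mem_cons_of_mem hq) r (Finset.mem_cons_of_mem hr))
      (fun q hq => hac q (Finset.mem_cons_of_mem hq))
    have hp : p.IsPrime := hprime p (Finset.mem_cons_self _ _)
    by_cases hmem : a + x * c ∈ p
    · -- c ∉ p
      have hcp : c ∉ p := by
        intro hcp
        exact hac p (Finset.mem_cons_self _ _)
          ⟨by simpa using p.sub_mem hmem (p.mul_mem_left x hcp), hcp⟩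
      -- choose d_q ∈ q \ p for each q ∈ S'
      have hd : ∀ q ∈ S', ∃ d, d ∈ q ∧ d ∉ p := by
        intro q hq
        have hne : q ≠ p := fun h => hpS' (h ▸ hq)
        have := hinc q (Finset.mem_cons_of_mem hq) p (Finset.mem_cons_self _ _) hne
        obtain ⟨d, hd1, hd2⟩ := Set.not_subset.mp this
        exact ⟨d, hd1, hd2⟩
      choose! d hdq hdp using hd
      set e : R := ∏ q ∈ S', d q with he
      have hePnot : e ∉ p := by
        intro hep
        obtain ⟨q, hq, hqe⟩ := Ideal.IsPrime.prod_mem_iff.mp hep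
        exact hdp q hq hqe
      have heq : ∀ q ∈ S', e ∈ q := by
        intro q hq
        rw [he, Finset.prod_eq_prod_diff_singleton_mul hq]
        exact q.mul_mem_left _ (hdq q hq)
      refine ⟨x + e, ?_⟩
      intro r hr
      rcases Finset.mem_cons.mp hr with rfl | hr
      · intro habs
        have h1 : (a + x * c) + e * c ∈ r := by
          have : a + (x + e) * c = (a + x * c) + e * c := by ring
          rwa [this] at habs
        have h2 : e * c ∈ r := by simpa using r.sub_mem h1 hmem
        rcases hp.mem_or_mem h2 with h | h
        · exact hePnot h
        · exact hcp h
      · intro habs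
        have h1 : (a + x * c) + e * c ∈ r := by
          have : a + (x + e) * c = (a + x * c) + e * c := by ring
          rwa [this] at habs
        have h2 : e * c ∈ r := r.mul_mem_right c (heq r hr)
        exact hx r hr (by simpa using r.sub_mem h1 h2)
    · refine ⟨x, ?_⟩
      intro r hr
      rcases Finset.mem_cons.mp hr with rfl | hr
      · exact hmem
      · exact hx r hr

/-- In a ring of Krull dimension at most 1, a prime strictly contained in another prime
is a minimal prime. -/
lemma minimal_of_lt_of_dim_le_one (hdim : ringKrullDim R ≤ 1)
    {p q : Ideal R} (hp : p.IsPrime) (hq : q.IsPrime) (hpq : p < q) :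
    p ∈ minimalPrimes R := by
  refine ⟨⟨hp, bot_le⟩, ?_⟩
  rintro r ⟨hr, -⟩ hrp
  by_contra hne
  have hlt : r < p := lt_of_le_of_ne hrp (fun h => hne (le_of_eq h.symm))
  have hchain : ∃ s : LTSeries (PrimeSpectrum R), s.length = 2 := by
    refine ⟨⟨2, ![⟨r, hr⟩, ⟨p, hp⟩, ⟨q, hq⟩], ?_⟩, rfl⟩
    intro i
    fin_cases i
    · show (⟨r, hr⟩ : PrimeSpectrum R) < ⟨p, hp⟩
      exact hlt
    · show (⟨p, hp⟩ : PrimeSpectrum R) < ⟨q, hq⟩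
      exact hpq
  obtain ⟨s, hs⟩ := hchain
  have h2 := Order.LTSeries.length_le_krullDim s
  rw [hs] at h2
  have : (2 : WithBot ℕ∞) ≤ 1 := le_trans h2 hdim
  norm_num at this

lemma isPrime_of_mem_minimalPrimes {I p : Ideal R} (hp : p ∈ I.minimalPrimes) : p.IsPrime :=
  hp.1.1

/-- Bass's stable range theorem in the form needed: a unimodular vector of length `m+3`
over a 1-dimensional Noetherian ring can be shortened. -/
lemma bass_stable_range [IsNoetherianRing R] (hdim : ringKrullDim R ≤ 1) (m : ℕ)
    (v : Fin (m+3) → R) (hv : Ideal.span (Set.range v) = ⊤) :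
    ∃ t : Fin (m+2) → R,
      Ideal.span (Set.range fun i : Fin (m+2) => v i.succ + t i * v 0) = ⊤ := by
  classical
  set a : R := v ((0 : Fin (m+2)).succ) with ha
  set c : R := v 0 with hc
  set lastI : Fin (m+2) := Fin.last (m+1) with hlastI
  have hlast_ne : lastI ≠ 0 := by
    simp [hlastI, Fin.ext_iff]
  set b : R := v lastI.succ with hb
  -- Step 1: choose x avoiding minimal primes not containing (a, c)
  have hminfin : (minimalPrimes R).Finite := minimalPrimes.finite_of_isNoetherianRing R
  set S₁ : Set (Ideal R) := {p ∈ minimalPrimes R | ¬ (a ∈ p ∧ c ∈ p)} with hS₁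
  have hS₁fin : S₁.Finite := hminfin.subset (fun p hp => hp.1)
  obtain ⟨x, hx⟩ := coset_avoidance hS₁fin.toFinset
    (fun p hp => ((hS₁fin.mem_toFinset.mp hp).1).1.1)
    (fun p hp q hq hne hle => by
      have hp' := (hS₁fin.mem_toFinset.mp hp).1
      have hq' := (hS₁fin.mem_toFinset.mp hq).1
      exact hne (le_antisymm hle (hq'.2 hp'.1 hle)))
    a c (fun p hp => (hS₁fin.mem_toFinset.mp hp).2)
  set a' : R := a + x * c with ha'
  have hP : ∀ p ∈ minimalPrimes R, a' ∈ p → a ∈ p ∧ c ∈ p := by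
    intro p hp hap
    by_contra hcon
    exact hx p (hS₁fin.mem_toFinset.mpr ⟨hp, hcon⟩) hap
  -- the ideal J
  set J : Ideal R := Ideal.span
    (insert a' ((fun i : Fin (m+2) => v i.succ) '' {i | i ≠ 0 ∧ i ≠ lastI})) with hJ
  -- bad maximal ideals
  set Bad : Set (Ideal R) := {M | J ≤ M ∧ M.IsMaximal ∧ c ∉ M} with hBad
  have hBadMin : Bad ⊆ J.minimalPrimes := by
    rintro M ⟨hJM, hMmax, hcM⟩
    refine ⟨⟨hMmax.isPrime, hJM⟩, ?_⟩
    rintro q ⟨hqpr, hJq⟩ hqM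
    by_contra hne
    have hqlt : q < M := lt_of_le_of_ne hqM (fun h => hne (le_of_eq h.symm))
    have hqmin : q ∈ minimalPrimes R :=
      minimal_of_lt_of_dim_le_one hdim hqpr hMmax.isPrime hqlt
    have ha'q : a' ∈ q := hJq (Ideal.subset_span (Set.mem_insert _ _))
    exact hcM (hqM ((hP q hqmin ha'q).2))
  have hJminfin : J.minimalPrimes.Finite := by
    have : IsNoetherianRing (R ⧸ J) :=
      isNoetherianRing_of_surjective R _ (Ideal.Quotient.mk J) Ideal.Quotient.mk_surjective
    rw [Ideal.minimalPrimes_eq_comap]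
    exact (minimalPrimes.finite_of_isNoetherianRing (R ⧸ J)).image _
  have hBadFin : Bad.Finite := hJminfin.subset hBadMin
  -- Step 2: choose y avoiding bad maximal ideals
  obtain ⟨y, hy⟩ := coset_avoidance hBadFin.toFinset
    (fun M hM => ((hBadFin.mem_toFinset.mp hM).2.1).isPrime)
    (fun M hM N hN hne hle => by
      have hM' := (hBadFin.mem_toFinset.mp hM).2.1
      have hN' := (hBadFin.mem_toFinset.mp hN).2.1
      exact hne (hM'.eq_of_le hN'.ne_top hle))
    b c (fun M hM h => (hBadFin.mem_toFinset.mp hM).2.2 h.2)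
  -- the shortening vector
  refine ⟨fun i => if i = 0 then x else if i = lastI then y else 0, ?_⟩
  set w : Fin (m+2) → R := fun i => v i.succ + (if i = 0 then x else if i = lastI then y else 0) * v 0
    with hw
  by_contra hne
  obtain ⟨M, hMmax, hM⟩ := Ideal.exists_le_maximal _ hne
  have hwM : ∀ i, w i ∈ M := fun i => hM (Ideal.subset_span ⟨i, rfl⟩)
  have hw0 : w 0 = a' := by simp [hw, ha', ha, hc]
  have hwlast : w lastI = b + y * c := by simp [hw, hb, hc, hlast_ne]
  have hwmid : ∀ i : Fin (m+2), i ≠ 0 → i ≠ lastI → w i = v i.succ := by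
    intro i h0 hl
    simp [hw, h0, hl]
  have hJM : J ≤ M := by
    rw [hJ, Ideal.span_le]
    rintro z (rfl | ⟨i, ⟨hi0, hil⟩, rfl⟩)
    · rw [← hw0]; exact hwM 0
    · show v i.succ ∈ M
      rw [← hwmid i hi0 hil]; exact hwM i
  by_cases hcM : c ∈ M
  · -- all of v lies in M, contradicting unimodularity
    have haM : a ∈ M := by
      have := hwM 0
      rw [hw0, ha'] at this
      simpa using M.sub_mem this (M.mul_mem_left x hcM)
    have hbM : b ∈ M := by
      have := hwM lastI
      rw [hwlast] at this
      simpa using M.sub_mem this (M.mul_mem_left y hcM)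
    have hvM : ∀ j : Fin (m+3), v j ∈ M := by
      intro j
      induction j using Fin.cases with
      | zero => exact hcM
      | succ i =>
        by_cases hi0 : i = 0
        · subst hi0; exact haM
        · by_cases hil : i = lastI
          · subst hil; exact hbM
          · rw [← hwmid i hi0 hil]; exact hwM i
    have : Ideal.span (Set.range v) ≤ M := by
      rw [Ideal.span_le]; rintro z ⟨j, rfl⟩; exact hvM j
    rw [hv] at this
    exact hMmax.ne_top (top_le_iff.mp this)
  · -- M is bad, contradicting the choice of y
    have : M ∈ Bad := ⟨hJM, hMmax, hcM⟩
    have hyM := hy M (hBadFin.mem_toFinset.mpr this)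
    rw [← hwlast] at hyM
    exact hyM (hwM lastI)



open Matrix

/-- Elementary transvection as an element of `SL_n`. -/
def Tsl {n : ℕ} (i j : Fin n) (hij : i ≠ j) (t : R) : Matrix.SpecialLinearGroup (Fin n) R :=
  ⟨Matrix.transvection i j t, Matrix.det_transvection_of_ne i j hij t⟩

@[simp] lemma Tsl_coe {n : ℕ} (i j : Fin n) (hij : i ≠ j) (t : R) :
    (Tsl i j hij t : Matrix (Fin n) (Fin n) R) = Matrix.transvection i j t := rfl

lemma Tsl_mem {n : ℕ} (i j : Fin n) (hij : i ≠ j) (t : R) :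
    Tsl i j hij t ∈ ElementarySubgroup n R :=
  Subgroup.subset_closure ⟨i, j, t, hij, rfl⟩

lemma my_list_prod_mem {G : Type*} [Group G] {K : Subgroup G} {l : List G}
    (h : ∀ x ∈ l, x ∈ K) : l.prod ∈ K := by
  induction l with
  | nil => simpa using one_mem K
  | cons a l ih =>
    rw [List.prod_cons]
    exact mul_mem (h a List.mem_cons_self)
      (ih fun x hx => h x (List.mem_cons_of_mem _ hx))

lemma coe_map_prod {α : Type*} {n : Type*} [DecidableEq n] [Fintype n]
    (f : α → Matrix.SpecialLinearGroup n R) (l : List α) :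
    (((l.map f).prod : Matrix.SpecialLinearGroup n R) : Matrix n n R) =
      (l.map fun a => ((f a : Matrix n n R))).prod := by
  induction l with
  | nil => rfl
  | cons a l ih => simp [ih]

section Effects

variable {n : ℕ}

/-- Row operations adding multiples of row `0` to the rows `i.succ`. -/
lemma rowops_to_succ (t : Fin n → R) (l : List (Fin n)) (hl : l.Nodup)
    (M : Matrix (Fin (n+1)) (Fin (n+1)) R) :
    (∀ b, (((l.map fun i => Matrix.transvection (i.succ) 0 (t i)).prod) * M) 0 b = M 0 b) ∧
    (∀ (i : Fin n) (b : Fin (n+1)),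
      (((l.map fun i => Matrix.transvection (i.succ) 0 (t i)).prod) * M) i.succ b
      = M i.succ b + (if i ∈ l then t i * M 0 b else 0)) := by
  induction l with
  | nil => simp
  | cons j l ih =>
    obtain ⟨ih1, ih2⟩ := ih (List.nodup_cons.mp hl).2
    have hjl : j ∉ l := (List.nodup_cons.mp hl).1
    constructor
    · intro b
      rw [List.map_cons, List.prod_cons, mul_assoc,
        Matrix.transvection_mul_apply_of_ne _ _ _ _ (Fin.succ_ne_zero j).symm]
      exact ih1 b
    · intro i b
      rw [List.map_cons, List.prod_cons, mul_assoc]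
      by_cases hij : i = j
      · subst hij
        rw [Matrix.transvection_mul_apply_same, ih1, ih2]
        simp [hjl]
      · rw [Matrix.transvection_mul_apply_of_ne _ _ _ _
          (fun h => hij (Fin.succ_injective n h)), ih2]
        simp [hij]

/-- Row operations adding multiples of the rows `i.succ` to row `0`. -/
lemma rowops_to_zero (d : Fin n → R) (l : List (Fin n))
    (M : Matrix (Fin (n+1)) (Fin (n+1)) R) :
    (∀ (i : Fin n) (b : Fin (n+1)),
      (((l.map fun i => Matrix.transvection 0 (i.succ) (d i)).prod) * M) i.succ b
        = M i.succ b) ∧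
    (∀ b, (((l.map fun i => Matrix.transvection 0 (i.succ) (d i)).prod) * M) 0 b
      = M 0 b + (l.map fun i => d i * M i.succ b).sum) := by
  induction l with
  | nil => simp
  | cons j l ih =>
    obtain ⟨ih1, ih2⟩ := ih
    constructor
    · intro i b
      rw [List.map_cons, List.prod_cons, mul_assoc,
        Matrix.transvection_mul_apply_of_ne _ _ _ _ (Fin.succ_ne_zero i)]
      exact ih1 i b
    · intro b
      rw [List.map_cons, List.prod_cons, mul_assoc,
        Matrix.transvection_mul_apply_same, ih1, ih2]
      simp [add_assoc, add_comm, add_left_comm]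

/-- Column operations adding multiples of column `0` to the columns `j.succ`. -/
lemma colops_to_succ (u : Fin n → R) (l : List (Fin n)) (hl : l.Nodup)
    (M : Matrix (Fin (n+1)) (Fin (n+1)) R) :
    (∀ a, (M * ((l.map fun j => Matrix.transvection 0 (j.succ) (u j)).prod)) a 0 = M a 0) ∧
    (∀ (a : Fin (n+1)) (j : Fin n),
      (M * ((l.map fun j => Matrix.transvection 0 (j.succ) (u j)).prod)) a j.succ
      = M a j.succ + (if j ∈ l then u j * M a 0 else 0)) := by
  induction l generalizing M with
  | nil => simp
  | cons j l ih =>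
    obtain ⟨ih1, ih2⟩ := ih (List.nodup_cons.mp hl).2 (M * Matrix.transvection 0 (j.succ) (u j))
    have hjl : j ∉ l := (List.nodup_cons.mp hl).1
    constructor
    · intro a
      rw [List.map_cons, List.prod_cons, ← mul_assoc, ih1,
        Matrix.mul_transvection_apply_of_ne _ _ _ _ (Fin.succ_ne_zero j).symm]
    · intro a k
      have h0 : (M * Matrix.transvection 0 (j.succ) (u j)) a 0 = M a 0 :=
        Matrix.mul_transvection_apply_of_ne 0 j.succ a 0 (Fin.succ_ne_zero j).symm (u j) M
      rw [List.map_cons, List.prod_cons, ← mul_assoc, ih2, h0]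
      by_cases hkj : k = j
      · subst hkj
        rw [Matrix.mul_transvection_apply_same]
        simp [hjl]
      · have h1 : (M * Matrix.transvection 0 (j.succ) (u j)) a k.succ = M a k.succ :=
          Matrix.mul_transvection_apply_of_ne 0 j.succ a k.succ
            (fun h => hkj (Fin.succ_injective n h)) (u j) M
        rw [h1]
        simp [hkj]

end Effects

section Lift

variable {n : ℕ}

/-- Extending an `n × n` matrix to an `(n+1) × (n+1)` matrix with a `1` in the upper-left
corner. -/
def liftMat (C : Matrix (Fin n) (Fin n) R) : Matrix (Fin (n+1)) (Fin (n+1)) R :=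
  Matrix.of fun i j =>
    Fin.cases (Fin.cases 1 (fun _ => 0) j) (fun i' => Fin.cases 0 (fun j' => C i' j') j) i

@[simp] lemma liftMat_zero_zero (C : Matrix (Fin n) (Fin n) R) : liftMat C 0 0 = 1 := rfl

@[simp] lemma liftMat_zero_succ (C : Matrix (Fin n) (Fin n) R) (j : Fin n) :
    liftMat C 0 j.succ = 0 := by simp [liftMat]

@[simp] lemma liftMat_succ_zero (C : Matrix (Fin n) (Fin n) R) (i : Fin n) :
    liftMat C i.succ 0 = 0 := by simp [liftMat]

@[simp] lemma liftMat_succ_succ (C : Matrix (Fin n) (Fin n) R) (i j : Fin n) :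
    liftMat C i.succ j.succ = C i j := by simp [liftMat]

lemma liftMat_one : liftMat (1 : Matrix (Fin n) (Fin n) R) = 1 := by
  ext i j
  induction i using Fin.cases with
  | zero =>
    induction j using Fin.cases with
    | zero => simp
    | succ j => simp [Matrix.one_apply, (Fin.succ_ne_zero j).symm]
  | succ i =>
    induction j using Fin.cases with
    | zero => simp [Matrix.one_apply, Fin.succ_ne_zero i]
    | succ j => simp [Matrix.one_apply, Fin.succ_inj]

lemma liftMat_mul (C D : Matrix (Fin n) (Fin n) R) :
    liftMat (C * D) = liftMat C * liftMat D := by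
  ext i j
  rw [Matrix.mul_apply]
  induction i using Fin.cases with
  | zero =>
    induction j using Fin.cases with
    | zero => simp [Fin.sum_univ_succ]
    | succ j => simp [Fin.sum_univ_succ]
  | succ i =>
    induction j using Fin.cases with
    | zero => simp [Fin.sum_univ_succ]
    | succ j => simp [Fin.sum_univ_succ, Matrix.mul_apply]

lemma liftMat_submatrix (C : Matrix (Fin n) (Fin n) R) :
    (liftMat C).submatrix Fin.succ Fin.succ = C := by
  ext i j
  simp

lemma det_eq_of_upper_left_one (M : Matrix (Fin (n+1)) (Fin (n+1)) R)
    (h00 : M 0 0 = 1) (h0s : ∀ j : Fin n, M 0 j.succ = 0) :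
    M.det = (M.submatrix Fin.succ Fin.succ).det := by
  rw [Matrix.det_succ_row_zero, Fin.sum_univ_succ]
  simp [h00, h0s, Fin.succAbove_zero]

lemma liftMat_det (C : Matrix (Fin n) (Fin n) R) : (liftMat C).det = C.det := by
  rw [det_eq_of_upper_left_one _ (liftMat_zero_zero C) (liftMat_zero_succ C),
    liftMat_submatrix]

lemma liftMat_transvection (i j : Fin n) (t : R) :
    liftMat (Matrix.transvection i j t) = Matrix.transvection i.succ j.succ t := by
  ext a b
  have he : ∀ (a b : Fin (n+1)),
      Matrix.transvection (i.succ) (j.succ) t a b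
        = (1 : Matrix (Fin (n+1)) (Fin (n+1)) R) a b
          + Matrix.single i.succ j.succ t a b := by
    intro a b
    rw [Matrix.transvection, Matrix.add_apply]
  have he' : ∀ (a b : Fin n),
      Matrix.transvection i j t a b
        = (1 : Matrix (Fin n) (Fin n) R) a b + Matrix.single i j t a b := by
    intro a b
    rw [Matrix.transvection, Matrix.add_apply]
  induction a using Fin.cases with
  | zero =>
    induction b using Fin.cases with
    | zero =>
      rw [liftMat_zero_zero, he]
      simp [Matrix.one_apply, Matrix.single, Fin.succ_ne_zero]
    | succ b =>
      rw [liftMat_zero_succ, he]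
      simp [Matrix.one_apply, Matrix.single, Fin.succ_ne_zero,
        (Fin.succ_ne_zero b).symm]
  | succ a =>
    induction b using Fin.cases with
    | zero =>
      rw [liftMat_succ_zero, he]
      simp [Matrix.one_apply, Matrix.single, Fin.succ_ne_zero,
        (Fin.succ_ne_zero a).symm]
    | succ b =>
      rw [liftMat_succ_succ, he, he']
      simp [Matrix.one_apply, Matrix.single, Fin.succ_inj,
        Fin.succ_injective n |>.eq_iff]

/-- The embedding `SL_n(R) →* SL_{n+1}(R)` as a block sum with `1`. -/
def liftSL : Matrix.SpecialLinearGroup (Fin n) R →* Matrix.SpecialLinearGroup (Fin (n+1)) R where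
  toFun C := ⟨liftMat (C : Matrix (Fin n) (Fin n) R), by rw [liftMat_det]; exact C.2⟩
  map_one' := Subtype.ext liftMat_one
  map_mul' C D := Subtype.ext (liftMat_mul _ _)

@[simp] lemma liftSL_coe (C : Matrix.SpecialLinearGroup (Fin n) R) :
    (liftSL C : Matrix (Fin (n+1)) (Fin (n+1)) R) = liftMat (C : Matrix (Fin n) (Fin n) R) := rfl

lemma liftSL_mem_elementary {C : Matrix.SpecialLinearGroup (Fin n) R}
    (hC : C ∈ ElementarySubgroup n R) : liftSL C ∈ ElementarySubgroup (n+1) R := by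
  refine Subgroup.closure_induction
    (p := fun x _ => liftSL x ∈ ElementarySubgroup (n+1) R) ?_ ?_ ?_ ?_ hC
  · rintro x ⟨i, j, t, hij, hx⟩
    apply Subgroup.subset_closure
    refine ⟨i.succ, j.succ, t, fun h => hij (Fin.succ_injective n h), ?_⟩
    rw [liftSL_coe, hx, liftMat_transvection]
  · show liftSL 1 ∈ _
    rw [_root_.map_one]; exact one_mem _
  · intro x y hx hy ihx ihy
    rw [_root_.map_mul]; exact mul_mem ihx ihy
  · intro x hx ihx
    rw [_root_.map_inv]; exact inv_mem ihx

end Lift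

section Step

lemma unimodular_first_column {N : ℕ} (A : Matrix.SpecialLinearGroup (Fin (N+1)) R) :
    Ideal.span (Set.range fun i : Fin (N+1) => (A : Matrix (Fin (N+1)) (Fin (N+1)) R) i 0) = ⊤ := by
  rw [Ideal.eq_top_iff_one]
  have h3 : (Matrix.adjugate (A : Matrix (Fin (N+1)) (Fin (N+1)) R) *
      (A : Matrix (Fin (N+1)) (Fin (N+1)) R)) 0 0 = 1 := by
    rw [Matrix.adjugate_mul]
    simp
  rw [Matrix.mul_apply] at h3
  have hmem : ∑ j : Fin (N+1), Matrix.adjugate (A : Matrix (Fin (N+1)) (Fin (N+1)) R) 0 j *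
      (A : Matrix (Fin (N+1)) (Fin (N+1)) R) j 0 ∈
      Ideal.span (Set.range fun i : Fin (N+1) => (A : Matrix (Fin (N+1)) (Fin (N+1)) R) i 0) :=
    Ideal.sum_mem _ fun k _ => Ideal.mul_mem_left _ _ (Ideal.subset_span ⟨k, rfl⟩)
  rwa [h3] at hmem

lemma elementary_step [IsNoetherianRing R] (hdim : ringKrullDim R ≤ 1) (m : ℕ)
    (h : IsElementaryGenerated (m+2) R) : IsElementaryGenerated (m+3) R := by
  show ElementarySubgroup (m+3) R = ⊤
  rw [eq_top_iff]
  rintro A -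
  set M₀ : Matrix (Fin (m+3)) (Fin (m+3)) R := (A : Matrix (Fin (m+3)) (Fin (m+3)) R) with hM₀
  set v : Fin (m+3) → R := fun i => M₀ i 0 with hv'
  have hv : Ideal.span (Set.range v) = ⊤ := unimodular_first_column A
  obtain ⟨t, ht⟩ := bass_stable_range hdim m v hv
  set w : Fin (m+2) → R := fun i => v i.succ + t i * v 0 with hw
  -- P₁ : add t i times row 0 to row i.succ
  set lS₁ : List (Matrix.SpecialLinearGroup (Fin (m+3)) R) :=
    (List.finRange (m+2)).map (fun i => Tsl i.succ 0 (Fin.succ_ne_zero i) (t i)) with hlS₁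
  set P₁ := lS₁.prod with hP₁
  have hP₁mem : P₁ ∈ ElementarySubgroup (m+3) R :=
    by show List.prod _ ∈ _
       refine my_list_prod_mem ?_
       rintro x hx; rw [hlS₁] at hx
       obtain ⟨i, -, rfl⟩ := List.mem_map.mp hx; exact Tsl_mem _ _ _ _
  have hP₁coe : (P₁ : Matrix (Fin (m+3)) (Fin (m+3)) R) =
      ((List.finRange (m+2)).map (fun i => Matrix.transvection (i.succ) 0 (t i))).prod := by
    rw [hP₁, hlS₁, coe_map_prod]; rfl
  set M₁ : Matrix (Fin (m+3)) (Fin (m+3)) R :=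
    ((List.finRange (m+2)).map (fun i => Matrix.transvection (i.succ) 0 (t i))).prod * M₀ with hM₁
  obtain ⟨h10, h1s⟩ := rowops_to_succ t (List.finRange (m+2)) (List.nodup_finRange _) M₀
  have hM₁s0 : ∀ i : Fin (m+2), M₁ i.succ 0 = w i := by
    intro i; rw [hM₁, h1s]; simp [hw, hv', List.mem_finRange]
  have hM₁00 : M₁ 0 0 = v 0 := h10 0
  -- coefficients expressing 1
  have hone : (1 : R) ∈ Ideal.span (Set.range w) := by rw [ht]; trivial
  obtain ⟨c, hc⟩ := Ideal.mem_span_range_iff_exists_fun.mp hone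
  set d : Fin (m+2) → R := fun i => c i * (1 - v 0) with hd
  -- P₂ : add d i times row i.succ to row 0
  set lS₂ : List (Matrix.SpecialLinearGroup (Fin (m+3)) R) :=
    (List.finRange (m+2)).map (fun i => Tsl 0 i.succ (Fin.succ_ne_zero i).symm (d i)) with hlS₂
  set P₂ := lS₂.prod with hP₂
  have hP₂mem : P₂ ∈ ElementarySubgroup (m+3) R :=
    by show List.prod _ ∈ _
       refine my_list_prod_mem ?_
       rintro x hx; rw [hlS₂] at hx
       obtain ⟨i, -, rfl⟩ := List.mem_map.mp hx; exact Tsl_mem _ _ _ _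
  have hP₂coe : (P₂ : Matrix (Fin (m+3)) (Fin (m+3)) R) =
      ((List.finRange (m+2)).map (fun i => Matrix.transvection 0 (i.succ) (d i))).prod := by
    rw [hP₂, hlS₂, coe_map_prod]; rfl
  set M₂ : Matrix (Fin (m+3)) (Fin (m+3)) R :=
    ((List.finRange (m+2)).map (fun i => Matrix.transvection 0 (i.succ) (d i))).prod * M₁ with hM₂
  obtain ⟨h2s, h20⟩ := rowops_to_zero d (List.finRange (m+2)) M₁
  have hM₂s0 : ∀ i : Fin (m+2), M₂ i.succ 0 = w i := by
    intro i; rw [hM₂, h2s]; exact hM₁s0 i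
  have hM₂00 : M₂ 0 0 = 1 := by
    rw [hM₂, h20, hM₁00]
    have hsum : ((List.finRange (m+2)).map (fun i => d i * M₁ i.succ 0)).sum
        = ∑ i : Fin (m+2), d i * w i := by
      rw [Fin.sum_univ_def]
      congr 1
      apply List.map_congr_left
      intro i _
      rw [hM₁s0 i]
    rw [hsum]
    have : ∑ i : Fin (m+2), d i * w i = (1 - v 0) * ∑ i : Fin (m+2), c i * w i := by
      rw [Finset.mul_sum]
      apply Finset.sum_congr rfl
      intro i _
      rw [hd]; ring
    rw [this, hc]
    ring
  -- P₃ : subtract w i times row 0 from row i.succ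
  set lS₃ : List (Matrix.SpecialLinearGroup (Fin (m+3)) R) :=
    (List.finRange (m+2)).map (fun i => Tsl i.succ 0 (Fin.succ_ne_zero i) (-(w i))) with hlS₃
  set P₃ := lS₃.prod with hP₃
  have hP₃mem : P₃ ∈ ElementarySubgroup (m+3) R :=
    by show List.prod _ ∈ _
       refine my_list_prod_mem ?_
       rintro x hx; rw [hlS₃] at hx
       obtain ⟨i, -, rfl⟩ := List.mem_map.mp hx; exact Tsl_mem _ _ _ _
  have hP₃coe : (P₃ : Matrix (Fin (m+3)) (Fin (m+3)) R) =
      ((List.finRange (m+2)).map (fun i => Matrix.transvection (i.succ) 0 (-(w i)))).prod := by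
    rw [hP₃, hlS₃, coe_map_prod]; rfl
  set M₃ : Matrix (Fin (m+3)) (Fin (m+3)) R :=
    ((List.finRange (m+2)).map (fun i => Matrix.transvection (i.succ) 0 (-(w i)))).prod * M₂
    with hM₃
  obtain ⟨h30, h3s⟩ := rowops_to_succ (fun i => -(w i)) (List.finRange (m+2))
    (List.nodup_finRange _) M₂
  have hM₃00 : M₃ 0 0 = 1 := by rw [hM₃, h30]; exact hM₂00
  have hM₃0b : ∀ b, M₃ 0 b = M₂ 0 b := fun b => h30 b
  have hM₃s0 : ∀ i : Fin (m+2), M₃ i.succ 0 = 0 := by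
    intro i
    rw [hM₃, h3s]
    simp only [List.mem_finRange, if_true]
    rw [hM₂s0 i, hM₂00]
    ring
  -- P₄ : column operations clearing row 0
  set u : Fin (m+2) → R := fun j => -(M₃ 0 j.succ) with hu
  set lS₄ : List (Matrix.SpecialLinearGroup (Fin (m+3)) R) :=
    (List.finRange (m+2)).map (fun j => Tsl 0 j.succ (Fin.succ_ne_zero j).symm (u j)) with hlS₄
  set P₄ := lS₄.prod with hP₄
  have hP₄mem : P₄ ∈ ElementarySubgroup (m+3) R :=
    by show List.prod _ ∈ _
       refine my_list_prod_mem ?_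
       rintro x hx; rw [hlS₄] at hx
       obtain ⟨i, -, rfl⟩ := List.mem_map.mp hx; exact Tsl_mem _ _ _ _
  have hP₄coe : (P₄ : Matrix (Fin (m+3)) (Fin (m+3)) R) =
      ((List.finRange (m+2)).map (fun j => Matrix.transvection 0 (j.succ) (u j))).prod := by
    rw [hP₄, hlS₄, coe_map_prod]; rfl
  set M₄ : Matrix (Fin (m+3)) (Fin (m+3)) R :=
    M₃ * ((List.finRange (m+2)).map (fun j => Matrix.transvection 0 (j.succ) (u j))).prod with hM₄
  obtain ⟨h4c0, h4s⟩ := colops_to_succ u (List.finRange (m+2)) (List.nodup_finRange _) M₃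
  have hM₄00 : M₄ 0 0 = 1 := by rw [hM₄, h4c0]; exact hM₃00
  have hM₄0s : ∀ j : Fin (m+2), M₄ 0 j.succ = 0 := by
    intro j
    rw [hM₄, h4s]
    simp only [List.mem_finRange, if_true]
    rw [hM₃00, hu]
    ring
  have hM₄s0 : ∀ i : Fin (m+2), M₄ i.succ 0 = 0 := by
    intro i; rw [hM₄, h4c0]; exact hM₃s0 i
  -- the matrix G
  set G : Matrix.SpecialLinearGroup (Fin (m+3)) R := P₃ * (P₂ * (P₁ * A * P₄)) with hG
  have hGcoe : (G : Matrix (Fin (m+3)) (Fin (m+3)) R) = M₄ := by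
    rw [hG]
    repeat rw [Matrix.SpecialLinearGroup.coe_mul]
    rw [hP₁coe, hP₂coe, hP₃coe, hP₄coe, hM₄, hM₃, hM₂, hM₁, hM₀]
    noncomm_ring
  -- G is the lift of a matrix in SL_{m+2}
  have hdetB : ((G : Matrix (Fin (m+3)) (Fin (m+3)) R).submatrix Fin.succ Fin.succ).det = 1 := by
    have := det_eq_of_upper_left_one (G : Matrix (Fin (m+3)) (Fin (m+3)) R)
      (by rw [hGcoe]; exact hM₄00) (by intro j; rw [hGcoe]; exact hM₄0s j)
    rw [← this]
    exact G.2
  set B : Matrix.SpecialLinearGroup (Fin (m+2)) R :=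
    ⟨(G : Matrix (Fin (m+3)) (Fin (m+3)) R).submatrix Fin.succ Fin.succ, hdetB⟩ with hB
  have hGB : G = liftSL B := by
    apply Subtype.ext
    ext i j
    rw [liftSL_coe]
    induction i using Fin.cases with
    | zero =>
      induction j using Fin.cases with
      | zero => rw [liftMat_zero_zero, hGcoe]; exact hM₄00
      | succ j => rw [liftMat_zero_succ, hGcoe]; exact hM₄0s j
    | succ i =>
      induction j using Fin.cases with
      | zero => rw [liftMat_succ_zero, hGcoe]; exact hM₄s0 i
      | succ j => rw [liftMat_succ_succ]; rfl
  have hBmem : B ∈ ElementarySubgroup (m+2) R := by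
    have h' : ElementarySubgroup (m+2) R = ⊤ := h
    rw [h']; trivial
  have hGmem : G ∈ ElementarySubgroup (m+3) R := by
    rw [hGB]; exact liftSL_mem_elementary hBmem
  have hA : A = P₁⁻¹ * (P₂⁻¹ * (P₃⁻¹ * G * P₄⁻¹)) := by
    rw [hG]; group
  rw [hA]
  exact mul_mem (inv_mem hP₁mem) (mul_mem (inv_mem hP₂mem)
    (mul_mem (mul_mem (inv_mem hP₃mem) hGmem) (inv_mem hP₄mem)))

end Step

/-- If `R` is a Noetherian ring of Krull dimension at most `1` with `SL_2(R) = E_2(R)`,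
then `SL_n(R) = E_n(R)` for all `n ≥ 2`. -/
theorem stmt_13 (R : Type) [CommRing R] [IsNoetherianRing R]
    (hdim : ringKrullDim R ≤ 1) (h2 : IsElementaryGenerated 2 R) :
    ∀ n : ℕ, 2 ≤ n → IsElementaryGenerated n R := by
  intro n hn
  induction n, hn using Nat.le_induction with
  | base => exact h2
  | succ n hn ih =>
    obtain ⟨m, rfl⟩ : ∃ m, n = m + 2 := ⟨n - 2, by omega⟩
    exact elementary_step hdim m ih
end
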